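/- Let p be a prime, A a Noetherian integral domain of characteristic p, and B an A-algebra of characteristic p which is finite as an A-module. Then there exists a nonzero element a ∈ A such that, after inverting the image of a, the induced homomorphism of perfections A_perf[a⁻¹] → B_perf[a⁻¹] is of finite type; i.e. the localization of PerfectClosure B p away from the image of a is a finite-type algebra over the localization of PerfectClosure A p away from the image of a. -/

import Mathlib

universe u

open PerfectClosure Function

section Aux

variable (p : ℕ) [Fact p.Prime]

private theorem pc_symm_iterate (K : Type u) [CommRing K] [CharP K p] (n : ℕ) (x : K) :
    (⇑(frobeniusEquiv (PerfectClosure K p) p).symm)^[n] (of K p x) = mk K p (n, x) := by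
  apply (injective_frobenius (PerfectClosure K p) p).iterate n
  have h : Function.LeftInverse (frobenius (PerfectClosure K p) p)
      ⇑(frobeniusEquiv (PerfectClosure K p) p).symm :=
    frobenius_apply_frobeniusEquiv_symm (PerfectClosure K p) p
  rw [h.iterate n _, iterate_frobenius_mk]

private theorem pc_mk_add_same (K : Type u) [CommRing K] [CharP K p] (n : ℕ) (x y : K) :
    mk K p (n, x) + mk K p (n, y) = mk K p (n, x + y) := by
  rw [mk_add_mk]
  have h : mk K p (n, x + y) = mk K p (n + n, (frobenius K p)^[n] (x + y)) :=
    R.sound K p n n (x + y) _ rfl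
  rw [h, iterate_map_add]

private theorem pc_mk_mul_same (K : Type u) [CommRing K] [CharP K p] (n : ℕ) (x y : K) :
    mk K p (n, x) * mk K p (n, y) = mk K p (n, x * y) := by
  rw [mk_mul_mk]
  have h : mk K p (n, x * y) = mk K p (n + n, (frobenius K p)^[n] (x * y)) :=
    R.sound K p n n (x * y) _ rfl
  rw [h, iterate_map_mul]

private theorem pc_isDomain (A : Type u) [CommRing A] [IsDomain A] [CharP A p] :
    IsDomain (PerfectClosure A p) := by
  haveI : Nontrivial (PerfectClosure A p) :=
    CharP.nontrivial_of_char_ne_one (Fact.out (p := p.Prime)).ne_one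
  haveI : NoZeroDivisors (PerfectClosure A p) := by
    constructor
    intro x y hxy
    revert hxy
    refine induction_on x fun ⟨n, u⟩ => induction_on y fun ⟨m, v⟩ => fun h => ?_
    rw [mk_mul_mk] at h
    rw [show (0 : PerfectClosure A p) = mk A p (n + m, 0) from (mk_zero_right A p (n + m)).symm,
      eq_iff] at h
    have hw : (frobenius A p)^[m] u * (frobenius A p)^[n] v = 0 :=
      (frobenius_inj A p).iterate (n + m) (by simpa using h)
    have hp : p ≠ 0 := (Fact.out (p := p.Prime)).ne_zero
    rcases mul_eq_zero.mp hw with hu | hv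
    · left
      rw [iterate_frobenius] at hu
      have : u = 0 := (pow_eq_zero_iff (pow_ne_zero m hp)).mp hu
      rw [this, mk_zero_right]
    · right
      rw [iterate_frobenius] at hv
      have : v = 0 := (pow_eq_zero_iff (pow_ne_zero n hp)).mp hv
      rw [this, mk_zero_right]
  exact NoZeroDivisors.to_isDomain _

end Aux

open PerfectClosure in
theorem perfection_finite_localization_finiteType (p : ℕ) [Fact p.Prime]
    (A B : Type u) [CommRing A] [IsDomain A] [IsNoetherianRing A] [CharP A p]
    [CommRing B] [CharP B p] [Algebra A B] [Module.Finite A B] :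
    ∃ a : A, a ≠ 0 ∧
      (Localization.awayMap
        (PerfectClosure.lift A p (PerfectClosure B p)
          ((PerfectClosure.of B p).comp (algebraMap A B)))
        (PerfectClosure.of A p a)).FiniteType := by
  classical
  obtain ⟨r, e, he⟩ := Module.Finite.exists_fin (R := A) (M := B)
  set Ap := PerfectClosure A p with hApdef
  set Bp := PerfectClosure B p with hBpdef
  set f : Ap →+* Bp :=
    PerfectClosure.lift A p Bp ((PerfectClosure.of B p).comp (algebraMap A B)) with hfdef
  haveI : IsDomain Ap := pc_isDomain p A
  letI : Algebra Ap Bp := f.toAlgebra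
  have halg : algebraMap Ap Bp = f := RingHom.algebraMap_toAlgebra f
  have hf_mk : ∀ (n : ℕ) (x : A), f (mk A p (n, x)) = mk B p (n, algebraMap A B x) := by
    intro n x
    have h0 : f (mk A p (n, x)) =
        (⇑(frobeniusEquiv Bp p).symm)^[n] (of B p (algebraMap A B x)) := rfl
    rw [h0, pc_symm_iterate]
  have hψB_mk : ∀ (n : ℕ) (b : B),
      (frobeniusEquiv Bp p).symm (mk B p (n, b)) = mk B p (n + 1, b) := by
    intro n b
    apply injective_frobenius Bp p
    rw [frobenius_apply_frobeniusEquiv_symm, frobenius_mk]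
    exact (mk_succ_pow B p n b).symm
  have hcomm : ∀ x : Ap,
      (frobeniusEquiv Bp p).symm (f x) = f ((frobeniusEquiv Ap p).symm x) := by
    intro x
    apply injective_frobenius Bp p
    rw [frobenius_apply_frobeniusEquiv_symm, ← RingHom.map_frobenius,
      frobenius_apply_frobeniusEquiv_symm]
  set E : ℕ → Fin r → Bp := fun n i => mk B p (n, e i) with hEdef
  have hL1 : ∀ (n : ℕ) (b : B), mk B p (n, b) ∈ Submodule.span Ap (Set.range (E n)) := by
    intro n b
    have hb : b ∈ Submodule.span A (Set.range e) := he ▸ Submodule.mem_top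
    induction hb using Submodule.span_induction with
    | mem x h => obtain ⟨i, rfl⟩ := h; exact Submodule.subset_span ⟨i, rfl⟩
    | zero => rw [mk_zero_right]; exact Submodule.zero_mem _
    | add x y hx hy hx' hy' => rw [← pc_mk_add_same]; exact Submodule.add_mem _ hx' hy'
    | smul a x hx hx' =>
        rw [Algebra.smul_def, ← pc_mk_mul_same, ← hf_mk, ← halg, ← Algebra.smul_def]
        exact Submodule.smul_mem _ _ hx'
  have hmemW : ∀ (n : ℕ) (x : Bp), x ∈ Submodule.span Ap (Set.range (E n)) →
      LocalizedModule.mkLinearMap (nonZeroDivisors Ap) Bp x ∈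
        Submodule.span (FractionRing Ap)
          (⇑(LocalizedModule.mkLinearMap (nonZeroDivisors Ap) Bp) '' Set.range (E n)) := by
    intro n x hx
    have h1 : LocalizedModule.mkLinearMap (nonZeroDivisors Ap) Bp x ∈
        Submodule.localized' (FractionRing Ap) (nonZeroDivisors Ap)
          (LocalizedModule.mkLinearMap (nonZeroDivisors Ap) Bp)
          (Submodule.span Ap (Set.range (E n))) :=
      (Submodule.mem_localized' (FractionRing Ap) (nonZeroDivisors Ap)
        (LocalizedModule.mkLinearMap (nonZeroDivisors Ap) Bp)
        (Submodule.span Ap (Set.range (E n))) _).mpr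
        ⟨x, hx, 1, IsLocalizedModule.mk'_one (nonZeroDivisors Ap) _ x⟩
    rw [← Submodule.localized'_span (FractionRing Ap) (nonZeroDivisors Ap)
      (LocalizedModule.mkLinearMap (nonZeroDivisors Ap) Bp)]
    exact h1
  set W : ℕ → Submodule (FractionRing Ap) (LocalizedModule (nonZeroDivisors Ap) Bp) :=
    fun n => Submodule.span (FractionRing Ap)
      (⇑(LocalizedModule.mkLinearMap (nonZeroDivisors Ap) Bp) '' Set.range (E n)) with hWdef
  have hWmono : ∀ n, W n ≤ W (n + 1) := by
    intro n
    apply Submodule.span_le.mpr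
    rintro _ ⟨_, ⟨i, rfl⟩, rfl⟩
    refine hmemW (n + 1) (E n i) ?_
    show mk B p (n, e i) ∈ _
    rw [← mk_succ_pow]
    exact hL1 (n + 1) _
  have hstab : ∃ N, W (N + 1) ≤ W N := by
    by_contra hcon
    push_neg at hcon
    have hlt : ∀ n, W n < W (n + 1) := fun n => lt_of_le_of_ne (hWmono n)
      (fun hEq => hcon n (le_of_eq hEq.symm))
    have hsm : StrictMono fun n => Module.finrank (FractionRing Ap) (W n) := by
      apply strictMono_nat_of_lt_succ
      intro n
      haveI : FiniteDimensional (FractionRing Ap) ↥(W (n + 1)) :=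
        FiniteDimensional.span_of_finite (FractionRing Ap)
          ((Set.finite_range (E (n + 1))).image _)
      exact Submodule.finrank_lt_finrank_of_lt (hlt n)
    have hb : ∀ n, Module.finrank (FractionRing Ap) (W n) ≤ r := by
      intro n
      have h1 : (Set.range (⇑(LocalizedModule.mkLinearMap (nonZeroDivisors Ap) Bp) ∘ E n)).finrank
          (FractionRing Ap) ≤ Fintype.card (Fin r) :=
        finrank_range_le_card _
      rw [Set.range_comp] at h1
      have h2 : Module.finrank (FractionRing Ap) ↥(W n) ≤ Fintype.card (Fin r) := h1
      simpa using h2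
    have h3 := hsm.le_apply (x := r + 1)
    have h4 := hb (r + 1)
    omega
  obtain ⟨N, hN⟩ := hstab
  have hrel : ∀ i, ∃ s : nonZeroDivisors Ap,
      (s : Ap) • E (N + 1) i ∈ Submodule.span Ap (Set.range (E N)) := by
    intro i
    have h1 : LocalizedModule.mkLinearMap (nonZeroDivisors Ap) Bp (E (N + 1) i) ∈ W N :=
      hN (hmemW (N + 1) (E (N + 1) i) (Submodule.subset_span ⟨i, rfl⟩))
    have h2 : LocalizedModule.mkLinearMap (nonZeroDivisors Ap) Bp (E (N + 1) i) ∈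
        Submodule.localized' (FractionRing Ap) (nonZeroDivisors Ap)
          (LocalizedModule.mkLinearMap (nonZeroDivisors Ap) Bp)
          (Submodule.span Ap (Set.range (E N))) := by
      rw [Submodule.localized'_span (FractionRing Ap) (nonZeroDivisors Ap)
        (LocalizedModule.mkLinearMap (nonZeroDivisors Ap) Bp)]
      exact h1
    rw [Submodule.mem_localized'] at h2
    obtain ⟨m, hm, s, hs⟩ := h2
    rw [← IsLocalizedModule.mk'_one (nonZeroDivisors Ap)
      (LocalizedModule.mkLinearMap (nonZeroDivisors Ap) Bp) (E (N + 1) i),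
      IsLocalizedModule.mk'_eq_mk'_iff] at hs
    obtain ⟨u, hu⟩ := hs
    rw [one_smul] at hu
    refine ⟨u * s, ?_⟩
    have hcoe : ((u * s : nonZeroDivisors Ap) : Ap) • E (N + 1) i = (u : Ap) • m := by
      rw [Submonoid.coe_mul, mul_smul, ← Submonoid.smul_def, ← Submonoid.smul_def, hu,
        Submonoid.smul_def]
    rw [hcoe]
    exact Submodule.smul_mem _ _ hm
  choose sf hsf using hrel
  set s0 : nonZeroDivisors Ap := ∏ i, sf i with hs0def
  have hrel2 : ∀ i, (s0 : Ap) • E (N + 1) i ∈ Submodule.span Ap (Set.range (E N)) := by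
    intro i
    have hsplit : (s0 : Ap) = (∏ j ∈ Finset.univ.erase i, (sf j : Ap)) * (sf i : Ap) := by
      rw [hs0def]
      push_cast
      exact (Finset.prod_erase_mul _ _ (Finset.mem_univ i)).symm
    rw [hsplit, mul_smul]
    exact Submodule.smul_mem _ _ (hsf i)
  have hrel3 : ∀ i, ∃ c : Fin r → Ap, ∑ j, c j • E N j = (s0 : Ap) • E (N + 1) i :=
    fun i => (Submodule.mem_span_range_iff_exists_fun Ap).mp (hrel2 i)
  choose c hc using hrel3
  obtain ⟨⟨M, a⟩, hMa⟩ := mk_surjective A p (s0 : Ap)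
  have hane : a ≠ 0 := by
    intro h0
    have : (s0 : Ap) ≠ 0 := nonZeroDivisors.ne_zero s0.2
    apply this
    rw [← hMa, h0, mk_zero_right]
  have hs0pow : (s0 : Ap) ^ p ^ M = of A p a := by
    rw [← hMa, ← iterate_frobenius, iterate_frobenius_mk]
  have hψB_E : ∀ (n : ℕ) (i : Fin r),
      (frobeniusEquiv Bp p).symm (E n i) = E (n + 1) i := fun n i => hψB_mk n (e i)
  have hrelk : ∀ (k : ℕ) (i : Fin r),
      f ((⇑(frobeniusEquiv Ap p).symm)^[k] (s0 : Ap)) * E (N + k + 1) i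
        = ∑ j, f ((⇑(frobeniusEquiv Ap p).symm)^[k] (c i j)) * E (N + k) j := by
    intro k
    induction k with
    | zero =>
        intro i
        have h0 := hc i
        simp only [Algebra.smul_def, halg] at h0
        simpa only [Function.iterate_zero_apply, Nat.add_zero] using h0.symm
    | succ k ih =>
        intro i
        have h2 := congrArg (frobeniusEquiv Bp p).symm (ih i)
        simp only [map_mul, map_sum, hcomm, hψB_E] at h2
        simpa only [Function.iterate_succ_apply', ← Nat.add_assoc] using h2
  have hskpow : ∀ k : ℕ,
      ((⇑(frobeniusEquiv Ap p).symm)^[k] (s0 : Ap)) ^ p ^ (M + k) = of A p a := by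
    intro k
    have h1 : ((⇑(frobeniusEquiv Ap p).symm)^[k] (s0 : Ap)) ^ p ^ k = (s0 : Ap) := by
      rw [← iterate_frobenius]
      exact (LeftInverse.iterate (frobenius_apply_frobeniusEquiv_symm Ap p) k) _
    calc ((⇑(frobeniusEquiv Ap p).symm)^[k] (s0 : Ap)) ^ p ^ (M + k)
        = (((⇑(frobeniusEquiv Ap p).symm)^[k] (s0 : Ap)) ^ p ^ k) ^ p ^ M := by
          rw [← pow_mul, ← pow_add, Nat.add_comm]
      _ = (s0 : Ap) ^ p ^ M := by rw [h1]
      _ = of A p a := hs0pow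
  refine ⟨a, hane, ?_⟩
  set w : Ap := of A p a with hwdef
  letI : Algebra (Localization.Away w) (Localization.Away (f w)) :=
    (Localization.awayMap f w).toAlgebra
  have halgLR : algebraMap (Localization.Away w) (Localization.Away (f w))
      = Localization.awayMap f w := RingHom.algebraMap_toAlgebra _
  have hmap : ∀ x : Ap, Localization.awayMap f w (algebraMap Ap (Localization.Away w) x)
      = algebraMap Bp (Localization.Away (f w)) (f x) := fun x => IsLocalization.map_eq _ x
  set φ : Bp →+* Localization.Away (f w) := algebraMap Bp (Localization.Away (f w)) with hφdef
  set gens : Finset (Localization.Away (f w)) :=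
    Finset.image (fun i => φ (E N i)) Finset.univ with hgensdef
  set Q := Algebra.adjoin (Localization.Away w) (gens : Set (Localization.Away (f w))) with hQdef
  have hq0 : ∀ x : Ap, φ (f x) ∈ Q := by
    intro x
    have h1 : φ (f x) = algebraMap (Localization.Away w) (Localization.Away (f w))
        (algebraMap Ap (Localization.Away w) x) := by
      rw [halgLR, hmap]
    rw [h1]
    exact Subalgebra.algebraMap_mem _ _
  have hu : IsUnit (algebraMap Ap (Localization.Away w) w) :=
    IsLocalization.Away.algebraMap_isUnit w
  obtain ⟨v', hv'⟩ := isUnit_iff_exists_inv.mp hu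
  set uinv : Localization.Away (f w) :=
    algebraMap (Localization.Away w) (Localization.Away (f w)) v' with huinvdef
  have huinvQ : uinv ∈ Q := Subalgebra.algebraMap_mem _ _
  have hUuinv : φ (f w) * uinv = 1 := by
    rw [huinvdef, halgLR, ← hmap w, ← map_mul, hv', map_one]
  have hgen : ∀ i, φ (E N i) ∈ Q := fun i =>
    Algebra.subset_adjoin (Finset.mem_coe.mpr (Finset.mem_image_of_mem _ (Finset.mem_univ i)))
  have hEdown : ∀ n, n ≤ N → ∀ i, E n i = E N i ^ p ^ (N - n) := by
    intro n hn i
    have h1 : mk B p (n, e i) = mk B p (N - n + n, (e i) ^ p ^ (N - n)) := by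
      have := R.sound B p (N - n) n (e i) _ rfl
      rwa [iterate_frobenius] at this
    rw [Nat.sub_add_cancel hn] at h1
    show mk B p (n, e i) = mk B p (N, e i) ^ p ^ (N - n)
    rw [mk_pow]
    exact h1
  have hup : ∀ (k : ℕ) (i : Fin r), φ (E (N + k) i) ∈ Q := by
    intro k
    induction k with
    | zero => exact hgen
    | succ k ih =>
        intro i
        show φ (E (N + k + 1) i) ∈ Q
        have h3 := congrArg φ (hrelk k i)
        simp only [map_mul, map_sum] at h3
        have htQ : φ (f ((⇑(frobeniusEquiv Ap p).symm)^[k] (s0 : Ap))) ∈ Q := hq0 _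
        have htpow : φ (f ((⇑(frobeniusEquiv Ap p).symm)^[k] (s0 : Ap))) ^ p ^ (M + k)
            = φ (f w) := by
          rw [← map_pow, ← map_pow, hskpow k]
        have he1 : p ^ (M + k) - 1 + 1 = p ^ (M + k) :=
          Nat.succ_pred_eq_of_pos (pow_pos (Fact.out (p := p.Prime)).pos _)
        have htinv : φ (f ((⇑(frobeniusEquiv Ap p).symm)^[k] (s0 : Ap)))
            * (φ (f ((⇑(frobeniusEquiv Ap p).symm)^[k] (s0 : Ap))) ^ (p ^ (M + k) - 1) * uinv)
            = 1 := by
          rw [← mul_assoc, ← pow_succ', he1, htpow, hUuinv]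
        have hRHS : (∑ j, φ (f ((⇑(frobeniusEquiv Ap p).symm)^[k] (c i j))) * φ (E (N + k) j))
            ∈ Q :=
          Subalgebra.sum_mem _ fun j _ => mul_mem (hq0 _) (ih j)
        have h4 : φ (E (N + k + 1) i)
            = (φ (f ((⇑(frobeniusEquiv Ap p).symm)^[k] (s0 : Ap))) ^ (p ^ (M + k) - 1) * uinv)
              * (∑ j, φ (f ((⇑(frobeniusEquiv Ap p).symm)^[k] (c i j))) * φ (E (N + k) j)) := by
          calc φ (E (N + k + 1) i)
              = (φ (f ((⇑(frobeniusEquiv Ap p).symm)^[k] (s0 : Ap)))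
                  * (φ (f ((⇑(frobeniusEquiv Ap p).symm)^[k] (s0 : Ap))) ^ (p ^ (M + k) - 1)
                    * uinv)) * φ (E (N + k + 1) i) := by rw [htinv, one_mul]
            _ = (φ (f ((⇑(frobeniusEquiv Ap p).symm)^[k] (s0 : Ap))) ^ (p ^ (M + k) - 1) * uinv)
                  * (φ (f ((⇑(frobeniusEquiv Ap p).symm)^[k] (s0 : Ap)))
                    * φ (E (N + k + 1) i)) := by ring
            _ = _ := by rw [h3]
        rw [h4]
        exact mul_mem (mul_mem (pow_mem htQ _) huinvQ) hRHS
  have hQall : ∀ b : Bp, φ b ∈ Q := by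
    intro b
    refine induction_on b fun ⟨n, b0⟩ => ?_
    have hb := hL1 n b0
    obtain ⟨cc, hcc⟩ := (Submodule.mem_span_range_iff_exists_fun Ap).mp hb
    have hmk : mk B p (n, b0) = ∑ j, f (cc j) * E n j := by
      rw [← hcc]
      simp only [Algebra.smul_def, halg]
      rfl
    rw [hmk, map_sum]
    refine Subalgebra.sum_mem _ fun j _ => ?_
    rw [map_mul]
    refine mul_mem (hq0 _) ?_
    rcases le_or_gt n N with h | h
    · rw [hEdown n h j, map_pow]
      exact pow_mem (hgen j) _
    · obtain ⟨k, rfl⟩ := Nat.exists_eq_add_of_le h.le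
      exact hup k j
  have htop : Algebra.adjoin (Localization.Away w) (gens : Set (Localization.Away (f w))) = ⊤ := by
    rw [← hQdef, eq_top_iff]
    rintro x -
    obtain ⟨⟨b, s⟩, hx⟩ := IsLocalization.surj (Submonoid.powers (f w)) x
    obtain ⟨n, hn⟩ := s.2
    have hn' : (f w) ^ n = (s : Bp) := hn
    have h5 : φ (f w) ^ n * uinv ^ n = 1 := by rw [← mul_pow, hUuinv, one_pow]
    have hxx : x = φ b * uinv ^ n := by
      calc x = x * (φ (f w) ^ n * uinv ^ n) := by rw [h5, mul_one]
        _ = (x * φ (s : Bp)) * uinv ^ n := by rw [← map_pow, hn', ← mul_assoc]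
        _ = φ b * uinv ^ n := by rw [hx]
    rw [hxx]
    exact mul_mem (hQall b) (pow_mem huinvQ n)
  exact ⟨⟨gens, htop⟩⟩
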